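/- A path P starting at the origin in ℝ^d intersects every hyperplane at distance exactly 1 from the origin if and only if every point of the unit sphere U is visible from some point of P; equivalently, iff U is contained in the convex hull of the image of P. -/

import Mathlib

open scoped RealInnerProductSpace

/-- The convex hull of a compact set in a finite-dimensional normed real vector
space is compact (via Carathéodory's theorem). -/
theorem aux_isCompact_convexHull {E : Type*} [NormedAddCommGroup E]
    [NormedSpace ℝ E] [FiniteDimensional ℝ E] {s : Set E} (hs : IsCompact s) :
    IsCompact (convexHull ℝ s) := by
  classical
  rcases s.eq_empty_or_nonempty with rfl | ⟨s₀, hs₀⟩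
  · simpa [convexHull_empty] using isCompact_empty
  set n := Module.finrank ℝ E + 1 with hn
  set D : Set ((Fin n → ℝ) × (Fin n → E)) :=
    (stdSimplex ℝ (Fin n)) ×ˢ Set.univ.pi (fun _ => s) with hD
  have hDc : IsCompact D :=
    (isCompact_stdSimplex _ _).prod (isCompact_univ_pi fun _ => hs)
  set φ : (Fin n → ℝ) × (Fin n → E) → E := fun p => ∑ i, p.1 i • p.2 i with hφdef
  have hφ : Continuous φ := by
    apply continuous_finset_sum
    intro i _
    exact (((continuous_apply i).comp continuous_fst).smul
      ((continuous_apply i).comp continuous_snd))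
  have himg : φ '' D = convexHull ℝ s := by
    apply Set.Subset.antisymm
    · rintro _ ⟨⟨w, z⟩, ⟨hw, hz⟩, rfl⟩
      exact (convex_convexHull ℝ s).sum_mem (fun i _ => hw.1 i)
        hw.2 (fun i _ => subset_convexHull ℝ s (hz i (Set.mem_univ i)))
    · intro x hx
      obtain ⟨ι, hι, z, w, hzs, hindep, hwpos, hwsum, hxsum⟩ :=
        eq_pos_convex_span_of_mem_convexHull hx
      have hcard : Fintype.card ι ≤ n := by
        calc Fintype.card ι
            ≤ Module.finrank ℝ (vectorSpan ℝ (Set.range z)) + 1 :=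
              hindep.card_le_finrank_succ
          _ ≤ Module.finrank ℝ E + 1 :=
              Nat.add_le_add_right (Submodule.finrank_le _) 1
      obtain ⟨f⟩ : Nonempty (ι ↪ Fin n) :=
        Function.Embedding.nonempty_of_card_le (by simpa using hcard)
      set w' : Fin n → ℝ := Function.extend f w 0 with hw'
      set z' : Fin n → E := Function.extend f z (fun _ => s₀) with hz'
      have keyE : ∀ (g : ι → E),
          (∑ j, Function.extend f g 0 j) = ∑ i, g i := by
        intro g
        rw [← Finset.sum_subset (Finset.subset_univ (Finset.univ.image f))]
        · rw [Finset.sum_image (fun i _ j _ h => f.injective h)]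
          exact Finset.sum_congr rfl fun i _ => f.injective.extend_apply _ _ _
        · intro j _ hj
          have h' : ¬ ∃ i, f i = j := by
            rintro ⟨i, rfl⟩
            exact hj (Finset.mem_image_of_mem f (Finset.mem_univ i))
          rw [Function.extend_apply' _ _ _ h']
          rfl
      have keyR : ∀ (g : ι → ℝ),
          (∑ j, Function.extend f g 0 j) = ∑ i, g i := by
        intro g
        rw [← Finset.sum_subset (Finset.subset_univ (Finset.univ.image f))]
        · rw [Finset.sum_image (fun i _ j _ h => f.injective h)]
          exact Finset.sum_congr rfl fun i _ => f.injective.extend_apply _ _ _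
        · intro j _ hj
          have h' : ¬ ∃ i, f i = j := by
            rintro ⟨i, rfl⟩
            exact hj (Finset.mem_image_of_mem f (Finset.mem_univ i))
          rw [Function.extend_apply' _ _ _ h']
          rfl
      have hFsum : (∑ j, w' j • z' j) = ∑ i, w i • z i := by
        have hptwise : ∀ j, w' j • z' j =
            Function.extend f (fun i => w i • z i) 0 j := by
          intro j
          by_cases h : ∃ i, f i = j
          · obtain ⟨i, rfl⟩ := h
            rw [hw', hz', f.injective.extend_apply, f.injective.extend_apply,
              f.injective.extend_apply]
          · rw [hw', hz', Function.extend_apply' _ _ _ h,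
              Function.extend_apply' _ _ _ h, Function.extend_apply' _ _ _ h]
            simp
        rw [Finset.sum_congr rfl fun j _ => hptwise j]
        exact keyE _
      have hwnn : ∀ j, 0 ≤ w' j := by
        intro j
        by_cases h : ∃ i, f i = j
        · obtain ⟨i, rfl⟩ := h
          rw [hw', f.injective.extend_apply]
          exact (hwpos i).le
        · rw [hw', Function.extend_apply' _ _ _ h]
          rfl
      have hwmem : w' ∈ stdSimplex ℝ (Fin n) := by
        refine ⟨hwnn, ?_⟩
        rw [hw']
        exact (keyR w).trans hwsum
      have hzmem : ∀ j, z' j ∈ s := by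
        intro j
        by_cases h : ∃ i, f i = j
        · obtain ⟨i, rfl⟩ := h
          rw [hz', f.injective.extend_apply]
          exact hzs (Set.mem_range_self i)
        · rw [hz', Function.extend_apply' _ _ _ h]
          exact hs₀
      refine ⟨(w', z'), ⟨hwmem, fun j _ => hzmem j⟩, ?_⟩
      show (∑ j, w' j • z' j) = x
      exact hFsum.trans hxsum
  rw [← himg]
  exact hDc.image hφ

/-- A continuous path `P` starting at the origin intersects every hyperplane at
distance exactly `1` from the origin iff every point of the unit sphere is
visible from some point of `P`, iff the unit sphere is contained in the convex
hull of the image of `P`. -/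
theorem stmt10 (d : ℕ) (L : ℝ) (hL : 0 ≤ L)
    (P : ℝ → EuclideanSpace ℝ (Fin d))
    (hcont : ContinuousOn P (Set.Icc 0 L)) (h0 : P 0 = 0) :
    ((∀ q : EuclideanSpace ℝ (Fin d), ‖q‖ = 1 →
        ∃ t ∈ Set.Icc (0 : ℝ) L, ⟪P t, q⟫ = 1) ↔
      (∀ q : EuclideanSpace ℝ (Fin d), ‖q‖ = 1 →
        ∃ t ∈ Set.Icc (0 : ℝ) L, 1 ≤ ‖P t‖ ∧ 1 ≤ ⟪P t, q⟫)) ∧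
    ((∀ q : EuclideanSpace ℝ (Fin d), ‖q‖ = 1 →
        ∃ t ∈ Set.Icc (0 : ℝ) L, ⟪P t, q⟫ = 1) ↔
      Metric.sphere (0 : EuclideanSpace ℝ (Fin d)) 1 ⊆
        convexHull ℝ (P '' Set.Icc 0 L)) := by
  set K := P '' Set.Icc 0 L with hK
  have hKc : IsCompact K := isCompact_Icc.image_of_continuousOn hcont
  have h0mem : (0 : EuclideanSpace ℝ (Fin d)) ∈ K :=
    ⟨0, ⟨le_refl 0, hL⟩, h0⟩
  -- IVT helper: if the inner product reaches 1 or more, it attains exactly 1.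
  have ivt : ∀ q : EuclideanSpace ℝ (Fin d),
      (∃ t ∈ Set.Icc (0:ℝ) L, 1 ≤ ⟪P t, q⟫) →
      ∃ t ∈ Set.Icc (0:ℝ) L, ⟪P t, q⟫ = 1 := by
    rintro q ⟨t, ht, h1⟩
    have hsub : Set.Icc (0:ℝ) t ⊆ Set.Icc 0 L := Set.Icc_subset_Icc le_rfl ht.2
    have hf : ContinuousOn (fun s => ⟪P s, q⟫) (Set.Icc 0 t) :=
      (hcont.mono hsub).inner continuousOn_const
    have h01 : (1:ℝ) ∈ Set.Icc (⟪P 0, q⟫) (⟪P t, q⟫) := by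
      constructor
      · rw [h0, inner_zero_left]; exact zero_le_one
      · exact h1
    obtain ⟨s, hs, hval⟩ := intermediate_value_Icc ht.1 hf h01
    exact ⟨s, hsub hs, hval⟩
  constructor
  · constructor
    · rintro hA q hq
      obtain ⟨t, ht, heq⟩ := hA q hq
      refine ⟨t, ht, ?_, heq.ge⟩
      have := real_inner_le_norm (P t) q
      rw [heq, hq, mul_one] at this
      exact this
    · rintro hB q hq
      obtain ⟨t, ht, _, h1⟩ := hB q hq
      exact ivt q ⟨t, ht, h1⟩
  · constructor
    · rintro hA x hx
      rw [mem_sphere_zero_iff_norm] at hx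
      by_contra hx'
      obtain ⟨f, c, hfc, hcx⟩ :=
        geometric_hahn_banach_closed_point (convex_convexHull ℝ K)
          (aux_isCompact_convexHull hKc).isClosed hx'
      set v := (InnerProductSpace.toDual ℝ (EuclideanSpace ℝ (Fin d))).symm f with hv
      have hvf : ∀ y, ⟪v, y⟫ = f y := fun y =>
        InnerProductSpace.toDual_symm_apply
      have hc0 : (0:ℝ) < c := by
        have := hfc 0 (subset_convexHull ℝ K h0mem)
        simpa using this
      have hfx : f x ≤ ‖v‖ := by
        rw [← hvf]
        calc ⟪v, x⟫ ≤ ‖v‖ * ‖x‖ := real_inner_le_norm v x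
          _ = ‖v‖ := by rw [hx, mul_one]
      have hvpos : (0:ℝ) < ‖v‖ := lt_of_lt_of_le (hc0.trans hcx) hfx
      have hvne : v ≠ 0 := norm_pos_iff.mp hvpos
      set u : EuclideanSpace ℝ (Fin d) := ‖v‖⁻¹ • v with hu
      have hun : ‖u‖ = 1 := norm_smul_inv_norm hvne
      obtain ⟨t, ht, heq⟩ := hA u hun
      have hmem : P t ∈ convexHull ℝ K :=
        subset_convexHull ℝ K ⟨t, ht, rfl⟩
      have hlt : f (P t) < ‖v‖ := (hfc _ hmem).trans_le (hcx.le.trans hfx)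
      have : ⟪P t, u⟫ < 1 := by
        rw [hu, real_inner_smul_right, real_inner_comm, hvf]
        calc ‖v‖⁻¹ * f (P t) < ‖v‖⁻¹ * ‖v‖ :=
              mul_lt_mul_of_pos_left hlt (inv_pos.mpr hvpos)
          _ = 1 := inv_mul_cancel₀ (ne_of_gt hvpos)
      rw [heq] at this
      exact lt_irrefl 1 this
    · rintro hC q hq
      have hqmem : q ∈ convexHull ℝ K :=
        hC (mem_sphere_zero_iff_norm.mpr hq)
      refine ivt q ?_
      by_contra hcon
      push_neg at hcon
      have hKsub : K ⊆ {y : EuclideanSpace ℝ (Fin d) | ⟪y, q⟫ < 1} := by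
        rintro y ⟨t, ht, rfl⟩
        exact hcon t ht
      have hconv : Convex ℝ {y : EuclideanSpace ℝ (Fin d) | ⟪y, q⟫ < 1} :=
        convex_halfSpace_lt
          ⟨fun a b => inner_add_left a b q, fun r a => real_inner_smul_left a q r⟩ 1
      have := convexHull_min hKsub hconv hqmem
      have hqq : ⟪q, q⟫ = 1 := by
        rw [real_inner_self_eq_norm_sq, hq, one_pow]
      rw [Set.mem_setOf_eq, hqq] at this
      exact lt_irrefl 1 this
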